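/- There is a constant C > 0 such that for all integers m ≥ 5 and all l, k ≥ 0 with 1 ≤ l + k ≤ ⌊m/2⌋ and l + k ≤ m, the quantity binom(m, l+k) · (l+k-3)! · (l+k)^{3/2} · (m-k-l-3)! / (m-3)! is at most C. -/

import Mathlib

private lemma lemA (n : ℕ) (hn : 1 ≤ n) :
    ((n - 3).factorial : ℝ) * (n : ℝ) ^ ((3 : ℝ) / 2) ≤ 2 * (n.factorial : ℝ) := by
  have h1 : (n : ℝ) ^ ((3 : ℝ) / 2) ≤ (n : ℝ) ^ (2 : ℕ) := by
    rw [← Real.rpow_natCast (n : ℝ) 2]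
    exact Real.rpow_le_rpow_of_exponent_le (by exact_mod_cast hn) (by norm_num)
  have h2 : (n - 3).factorial * n ^ 2 ≤ 2 * n.factorial := by
    rcases Nat.lt_or_ge n 3 with h | h
    · interval_cases n <;> simp [Nat.factorial]
    · obtain ⟨c, rfl⟩ : ∃ c, n = c + 3 := ⟨n - 3, by omega⟩
      have h3 : c + 3 - 3 = c := by omega
      have hf : (c + 3).factorial = (c + 3) * ((c + 2) * ((c + 1) * c.factorial)) := rfl
      rw [h3, hf]
      have hx : (c + 3) ^ 2 ≤ 2 * ((c + 3) * ((c + 2) * (c + 1))) := by zify; nlinarith [Int.natCast_nonneg c, pow_nonneg (Int.natCast_nonneg c) 3, sq_nonneg (c : ℤ)]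
      calc c.factorial * (c + 3) ^ 2
          ≤ c.factorial * (2 * ((c + 3) * ((c + 2) * (c + 1)))) :=
            Nat.mul_le_mul_left _ hx
        _ = 2 * ((c + 3) * ((c + 2) * ((c + 1) * c.factorial))) := by ring
  calc ((n - 3).factorial : ℝ) * (n : ℝ) ^ ((3 : ℝ) / 2)
      ≤ ((n - 3).factorial : ℝ) * (n : ℝ) ^ (2 : ℕ) := by
        have : (0:ℝ) ≤ ((n - 3).factorial : ℝ) := by positivity
        exact mul_le_mul_of_nonneg_left h1 this
    _ ≤ 2 * (n.factorial : ℝ) := by exact_mod_cast h2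

private lemma lemB (m q : ℕ) (hq : 3 ≤ q) (h : m ≤ 2 * q) :
    m * (m - 1) * (m - 2) * (q - 3).factorial ≤ 24 * q.factorial := by
  obtain ⟨b, rfl⟩ : ∃ b, q = b + 3 := ⟨q - 3, by omega⟩
  have h3 : b + 3 - 3 = b := by omega
  have hf : (b + 3).factorial = (b + 3) * ((b + 2) * ((b + 1) * b.factorial)) := rfl
  rw [h3, hf]
  have key : m * (m - 1) * (m - 2) ≤ (2 * b + 6) * (3 * b + 6) * (4 * b + 4) :=
    Nat.mul_le_mul (Nat.mul_le_mul (by omega) (by omega)) (by omega)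
  calc m * (m - 1) * (m - 2) * b.factorial
      ≤ (2 * b + 6) * (3 * b + 6) * (4 * b + 4) * b.factorial :=
        Nat.mul_le_mul_right _ key
    _ = 24 * ((b + 3) * ((b + 2) * ((b + 1) * b.factorial))) := by ring

private lemma fact3 (m : ℕ) (hm : 3 ≤ m) :
    (m.factorial : ℝ) = (m : ℝ) * ((m : ℝ) - 1) * ((m : ℝ) - 2) * ((m - 3).factorial : ℝ) := by
  obtain ⟨a, rfl⟩ : ∃ a, m = a + 3 := ⟨m - 3, by omega⟩
  have h3 : a + 3 - 3 = a := by omega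
  have hf : (a + 3).factorial = (a + 3) * ((a + 2) * ((a + 1) * a.factorial)) := rfl
  rw [h3, hf]
  push_cast
  ring

/-- There is `C > 0` so that for all `m ≥ 5`, `1 ≤ l + k ≤ ⌊m/2⌋`, `l + k ≤ m`,
`binom(m, l+k) (l+k-3)! (l+k)^{3/2} (m-k-l-3)! / (m-3)! ≤ C`
(with the convention `n! = 1` for negative `n`, realized by truncated subtraction). -/
theorem stmt3 : ∃ C : ℝ, 0 < C ∧ ∀ m l k : ℕ, 5 ≤ m → 1 ≤ l + k → l + k ≤ m / 2 → l + k ≤ m →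
    (Nat.choose m (l + k) : ℝ) * (Nat.factorial (l + k - 3) : ℝ) *
        ((l + k : ℝ) ^ ((3 : ℝ) / 2)) * (Nat.factorial (m - k - l - 3) : ℝ) /
        (Nat.factorial (m - 3) : ℝ) ≤ C := by
  refine ⟨48, by norm_num, fun m l k hm hn1 hhalf hle => ?_⟩
  set n := l + k with hn
  have e1 : m - k - l = m - n := by omega
  rw [e1]
  set q := m - n with hq
  have h2n : 2 * n ≤ m := by omega
  have hq3 : 3 ≤ q := by omega
  have hm2q : m ≤ 2 * q := by omega
  rw [div_le_iff₀ (by positivity)]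
  have hpos : (0 : ℝ) < (n.factorial : ℝ) * (q.factorial : ℝ) := by positivity
  rw [← mul_le_mul_iff_of_pos_right hpos]
  have e2 : ((l : ℝ) + (k : ℝ)) = (n : ℝ) := by rw [hn]; push_cast; ring
  rw [e2]
  have hC : (m.choose n : ℝ) * (n.factorial : ℝ) * (q.factorial : ℝ) = (m.factorial : ℝ) := by
    exact_mod_cast congrArg (Nat.cast (R := ℝ))
      (Nat.choose_mul_factorial_mul_factorial (show n ≤ m by omega))
  have hA := lemA n hn1
  have hB : (m : ℝ) * ((m : ℝ) - 1) * ((m : ℝ) - 2) * ((q - 3).factorial : ℝ)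
      ≤ 24 * (q.factorial : ℝ) := by
    have := lemB m q hq3 hm2q
    have hc : ((m * (m - 1) * (m - 2) * (q - 3).factorial : ℕ) : ℝ)
        ≤ ((24 * q.factorial : ℕ) : ℝ) := by exact_mod_cast this
    push_cast [Nat.cast_sub (show 1 ≤ m by omega), Nat.cast_sub (show 2 ≤ m by omega)] at hc
    convert hc using 2 <;> push_cast <;> ring_nf
  calc (m.choose n : ℝ) * ((n - 3).factorial : ℝ) * ((n : ℝ) ^ ((3 : ℝ) / 2)) *
        ((q - 3).factorial : ℝ) * ((n.factorial : ℝ) * (q.factorial : ℝ))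
      = ((m.choose n : ℝ) * (n.factorial : ℝ) * (q.factorial : ℝ)) *
        (((n - 3).factorial : ℝ) * (n : ℝ) ^ ((3 : ℝ) / 2) * ((q - 3).factorial : ℝ)) := by ring
    _ = (m.factorial : ℝ) *
        (((n - 3).factorial : ℝ) * (n : ℝ) ^ ((3 : ℝ) / 2) * ((q - 3).factorial : ℝ)) := by
        rw [hC]
    _ = ((m - 3).factorial : ℝ) * (((n - 3).factorial : ℝ) * (n : ℝ) ^ ((3 : ℝ) / 2)) *
        ((m : ℝ) * ((m : ℝ) - 1) * ((m : ℝ) - 2) * ((q - 3).factorial : ℝ)) := by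
        rw [fact3 m (by omega)]; ring
    _ ≤ ((m - 3).factorial : ℝ) * (2 * (n.factorial : ℝ)) * (24 * (q.factorial : ℝ)) := by
        have hm1 : (1 : ℝ) ≤ (m : ℝ) := by exact_mod_cast (by omega : 1 ≤ m)
        have hm2 : (2 : ℝ) ≤ (m : ℝ) := by exact_mod_cast (by omega : 2 ≤ m)
        have hnn : (0 : ℝ) ≤ (m : ℝ) * ((m : ℝ) - 1) * ((m : ℝ) - 2) * ((q - 3).factorial : ℝ) := by
          have hf0 : (0 : ℝ) ≤ ((q - 3).factorial : ℝ) := by positivity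
          exact mul_nonneg (mul_nonneg (mul_nonneg (by linarith) (by linarith)) (by linarith)) hf0
        gcongr <;> positivity
    _ = 48 * ((m - 3).factorial : ℝ) * ((n.factorial : ℝ) * (q.factorial : ℝ)) := by ring
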